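/- Let (m_1,…,m_n) be nonnegative integers, not all zero, and let Δ_{k_i} denote the forward difference operator in the variable k_i. Then ∑_{π ∈ S_n} Δ^{m_{π(1)}}_{k_1} Δ^{m_{π(2)}}_{k_2} ⋯ Δ^{m_{π(n)}}_{k_n} applied to the polynomial ∏_{1≤i<j≤n} (k_j − k_i)/(j−i) is identically zero. -/

import Mathlib

/-- Forward difference operator in the `i`-th variable, acting on functions of
integer tuples: `(Δᵢ f)(k) = f(k + eᵢ) − f(k)`. -/
def fdiff {n : ℕ} (i : Fin n) (f : (Fin n → ℤ) → ℚ) : (Fin n → ℤ) → ℚ :=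
  fun k => f (Function.update k i (k i + 1)) - f k

open Finset Matrix

/-- Generalized binomial-type function: `dcb x r = x(x-1)⋯(x-r+1)/r!` for `r ≥ 0`, else `0`. -/
noncomputable def dcb (x : ℤ) (r : ℤ) : ℚ :=
  if 0 ≤ r then (∏ t ∈ Finset.range r.toNat, ((x : ℚ) - t)) / (Nat.factorial r.toNat) else 0

lemma dcb_neg (x : ℤ) {r : ℤ} (hr : r < 0) : dcb x r = 0 := by
  simp [dcb, not_le.2 hr]

lemma dcb_step (x : ℤ) (r : ℤ) : dcb (x + 1) r - dcb x r = dcb x (r - 1) := by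
  rcases lt_trichotomy r 0 with h | h | h
  · rw [dcb_neg _ h, dcb_neg _ h, dcb_neg _ (by omega)]; ring
  · subst h; simp [dcb, dcb_neg x (show (0:ℤ)-1 < 0 by norm_num)]
  · have h0 : (0:ℤ) ≤ r := le_of_lt h
    have h1 : (0:ℤ) ≤ r - 1 := by omega
    obtain ⟨t, ht⟩ : ∃ t, r.toNat = t + 1 := ⟨r.toNat - 1, by omega⟩
    have hrt : (r-1).toNat = t := by omega
    rw [dcb, dcb, dcb, if_pos h0, if_pos h0, if_pos h1, hrt, ht]
    have e1 : ∏ u ∈ Finset.range (t+1), (((x:ℤ):ℚ) + 1 - u)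
        = (∏ u ∈ Finset.range t, (((x:ℤ):ℚ) - u)) * ((x:ℚ) + 1) := by
      rw [Finset.prod_range_succ']
      congr 1
      · apply Finset.prod_congr rfl
        intro u _
        push_cast; ring
      · push_cast; ring
    have e2 : ∏ u ∈ Finset.range (t+1), (((x:ℤ):ℚ) - u)
        = (∏ u ∈ Finset.range t, (((x:ℤ):ℚ) - u)) * ((x:ℚ) - t) := Finset.prod_range_succ _ _
    have e3 : ((t+1).factorial : ℚ) = (t+1) * (t.factorial : ℚ) := by
      rw [Nat.factorial_succ]; push_cast; ring
    push_cast at e1 e2 ⊢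
    rw [e1, e2, e3]
    have hf : (t.factorial : ℚ) ≠ 0 := Nat.cast_ne_zero.2 t.factorial_ne_zero
    field_simp
    ring

/-- One-variable forward difference. -/
noncomputable def ddop (f : ℤ → ℚ) : ℤ → ℚ := fun x => f (x + 1) - f x

lemma ddop_iter_dcb (M : ℕ) (r : ℤ) :
    ddop^[M] (fun x => dcb x r) = fun x => dcb x (r - M) := by
  induction M generalizing r with
  | zero => simp
  | succ M ih =>
    rw [Function.iterate_succ_apply]
    have : ddop (fun x => dcb x r) = fun x => dcb x (r - 1) := by
      funext x; exact dcb_step x r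
    rw [this, ih]
    funext x
    congr 1
    push_cast
    ring

lemma fdiff_prod {n : ℕ} (i : Fin n) (g : Fin n → ℤ → ℚ) :
    fdiff i (fun k => ∏ j, g j (k j)) =
      fun k => ∏ j, Function.update g i (ddop (g i)) j (k j) := by
  funext k
  have hsplit : ∀ (h : Fin n → ℤ → ℚ) (k' : Fin n → ℤ),
      ∏ j, h j (k' j) = h i (k' i) * ∏ j ∈ Finset.univ.erase i, h j (k' j) :=
    fun h k' => (Finset.mul_prod_erase Finset.univ _ (Finset.mem_univ i)).symm
  rw [fdiff, hsplit g, hsplit g, hsplit (Function.update g i (ddop (g i)))]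
  have h1 : ∀ j ∈ Finset.univ.erase i,
      g j (Function.update k i (k i + 1) j) = g j (k j) := by
    intro j hj
    rw [Function.update_of_ne (Finset.ne_of_mem_erase hj)]
  have h2 : ∀ j ∈ Finset.univ.erase i,
      Function.update g i (ddop (g i)) j (k j) = g j (k j) := by
    intro j hj
    rw [Function.update_of_ne (Finset.ne_of_mem_erase hj)]
  rw [Finset.prod_congr rfl h1, Finset.prod_congr rfl h2,
    Function.update_self, Function.update_self, ddop]
  ring

lemma fdiff_iter_prod {n : ℕ} (i : Fin n) (M : ℕ) (g : Fin n → ℤ → ℚ) :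
    (fdiff i)^[M] (fun k => ∏ j, g j (k j)) =
      fun k => ∏ j, Function.update g i (ddop^[M] (g i)) j (k j) := by
  induction M generalizing g with
  | zero => simp [Function.update_eq_self]
  | succ M ih =>
    rw [Function.iterate_succ_apply, fdiff_prod, ih]
    funext k
    apply Finset.prod_congr rfl
    intro j _
    rcases eq_or_ne j i with rfl | hj
    · rw [Function.update_idem, Function.update_self, Function.update_self,
        ← Function.iterate_succ_apply, Function.update_self]
    · rw [Function.update_of_ne hj, Function.update_of_ne hj, Function.update_of_ne hj]

lemma foldr_fdiff_prod {n : ℕ} (L : List (Fin n)) (M : Fin n → ℕ) (g : Fin n → ℤ → ℚ) :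
    (L.foldr (fun i F => (fdiff i)^[M i] ∘ F) id) (fun k => ∏ j, g j (k j)) =
      fun k => ∏ j,
        (L.foldr (fun i g' => Function.update g' i (ddop^[M i] (g' i))) g) j (k j) := by
  induction L with
  | nil => simp
  | cons i L ih =>
    simp only [List.foldr_cons, Function.comp_apply, ih, fdiff_iter_prod]

lemma foldr_update_eval_of_not_mem {n : ℕ} (L : List (Fin n)) (M : Fin n → ℕ)
    (g : Fin n → ℤ → ℚ) (j : Fin n) (hj : j ∉ L) :
    (L.foldr (fun i g' => Function.update g' i (ddop^[M i] (g' i))) g) j = g j := by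
  induction L with
  | nil => rfl
  | cons i L ih =>
    simp only [List.mem_cons, not_or] at hj
    simp only [List.foldr_cons]
    rw [Function.update_of_ne hj.1, ih hj.2]

lemma foldr_update_eval {n : ℕ} (L : List (Fin n)) (hL : L.Nodup) (M : Fin n → ℕ)
    (g : Fin n → ℤ → ℚ) (j : Fin n) (hj : j ∈ L) :
    (L.foldr (fun i g' => Function.update g' i (ddop^[M i] (g' i))) g) j
      = ddop^[M j] (g j) := by
  induction L with
  | nil => simp at hj
  | cons i L ih =>
    simp only [List.nodup_cons] at hL
    simp only [List.foldr_cons]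
    rcases eq_or_ne j i with rfl | hne
    · rw [Function.update_self, foldr_update_eval_of_not_mem L M g j hL.1]
    · rw [Function.update_of_ne hne]
      exact ih hL.2 (by rcases List.mem_cons.1 hj with h | h; exact absurd h hne; exact h)

lemma fdiff_comb {n : ℕ} {α : Type*} (i : Fin n) (s : Finset α) (c : α → ℚ)
    (f : α → (Fin n → ℤ) → ℚ) :
    fdiff i (fun k => ∑ a ∈ s, c a * f a k) = fun k => ∑ a ∈ s, c a * fdiff i (f a) k := by
  funext k
  simp only [fdiff]
  rw [← Finset.sum_sub_distrib]
  apply Finset.sum_congr rfl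
  intro a _
  ring

lemma fdiff_iter_comb {n : ℕ} {α : Type*} (i : Fin n) (M : ℕ) (s : Finset α) (c : α → ℚ)
    (f : α → (Fin n → ℤ) → ℚ) :
    (fdiff i)^[M] (fun k => ∑ a ∈ s, c a * f a k)
      = fun k => ∑ a ∈ s, c a * (fdiff i)^[M] (f a) k := by
  induction M generalizing f with
  | zero => simp
  | succ M ih =>
    rw [Function.iterate_succ_apply, fdiff_comb, ih]
    funext k
    apply Finset.sum_congr rfl
    intro a _
    rw [← Function.iterate_succ_apply]

lemma foldr_fdiff_comb {n : ℕ} {α : Type*} (L : List (Fin n)) (M : Fin n → ℕ) (s : Finset α)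
    (c : α → ℚ) (f : α → (Fin n → ℤ) → ℚ) :
    (L.foldr (fun i F => (fdiff i)^[M i] ∘ F) id) (fun k => ∑ a ∈ s, c a * f a k)
      = fun k => ∑ a ∈ s, c a * ((L.foldr (fun i F => (fdiff i)^[M i] ∘ F) id) (f a)) k := by
  induction L generalizing f with
  | nil => simp
  | cons i L ih =>
    simp only [List.foldr_cons, Function.comp_apply, ih, fdiff_iter_comb]

lemma descPochhammer_eval_prod (r : ℕ) (x : ℚ) :
    (descPochhammer ℚ r).eval x = ∏ t ∈ Finset.range r, (x - t) := by
  induction r with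
  | zero => simp
  | succ r ih => rw [descPochhammer_succ_eval, ih, Finset.prod_range_succ]

lemma pairs_prod_Ioi {n : ℕ} (f : Fin n × Fin n → ℚ) :
    ∏ p ∈ Finset.univ.filter (fun p : Fin n × Fin n => p.1 < p.2), f p
      = ∏ i : Fin n, ∏ j ∈ Finset.Ioi i, f (i, j) := by
  rw [Finset.prod_sigma']
  apply Finset.prod_nbij' (fun p => ⟨p.1, p.2⟩) (fun x => (x.1, x.2)) <;>
    simp [Finset.mem_sigma]

lemma pairs_prod_Iio {n : ℕ} (f : Fin n × Fin n → ℚ) :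
    ∏ p ∈ Finset.univ.filter (fun p : Fin n × Fin n => p.1 < p.2), f p
      = ∏ j : Fin n, ∏ i ∈ Finset.Iio j, f (i, j) := by
  rw [Finset.prod_sigma']
  apply Finset.prod_nbij' (fun p => ⟨p.2, p.1⟩) (fun x => (x.2, x.1)) <;>
    simp [Finset.mem_sigma]

lemma prod_range_sub_fact (J : ℕ) :
    ∏ t ∈ Finset.range J, ((J : ℚ) - t) = J.factorial := by
  induction J with
  | zero => simp
  | succ J ih =>
    rw [Finset.prod_range_succ']
    have : ∀ t ∈ Finset.range J, ((((J:ℕ)+1 : ℕ)):ℚ) - (((t+1 : ℕ)):ℚ) = (J:ℚ) - t := by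
      intro t _; push_cast; ring
    rw [Finset.prod_congr rfl this, ih, Nat.factorial_succ]
    push_cast
    ring

lemma Iio_fact {n : ℕ} (j : Fin n) :
    ∏ i ∈ Finset.Iio j, (((j : ℕ) : ℚ) - ((i : ℕ) : ℚ)) = ((j : ℕ).factorial : ℚ) := by
  rw [← prod_range_sub_fact (j : ℕ)]
  refine Finset.prod_nbij' (fun i => (i : ℕ)) (fun t => if h : t < n then ⟨t, h⟩ else j)
    ?_ ?_ ?_ ?_ ?_
  · intro a ha
    exact Finset.mem_range.2 (Fin.lt_def.1 (Finset.mem_Iio.1 ha))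
  · intro t ht
    have htj : t < (j : ℕ) := Finset.mem_range.1 ht
    have htn : t < n := htj.trans j.2
    simp only [dif_pos htn, Finset.mem_Iio, Fin.lt_def]
    exact htj
  · intro a _
    rw [dif_pos a.2]
  · intro t ht
    have htn : t < n := (Finset.mem_range.1 ht).trans j.2
    rw [dif_pos htn]
  · intro a _
    rfl

lemma vdm {n : ℕ} (k : Fin n → ℤ) :
    (∏ p ∈ Finset.univ.filter (fun p : Fin n × Fin n => p.1 < p.2),
      (((k p.2 : ℤ) : ℚ) - ((k p.1 : ℤ) : ℚ)) / (((p.2 : ℕ) : ℚ) - ((p.1 : ℕ) : ℚ)))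
    = Matrix.det (Matrix.of fun a b : Fin n => dcb (k b) ((a : ℕ) : ℤ)) := by
  have hnum := pairs_prod_Ioi (n := n) (fun p => ((k p.2 : ℤ) : ℚ) - ((k p.1 : ℤ) : ℚ))
  have hden := pairs_prod_Iio (n := n) (fun p => ((p.2 : ℕ) : ℚ) - ((p.1 : ℕ) : ℚ))
  rw [Finset.prod_div_distrib, hnum, hden]
  have hv : (∏ i : Fin n, ∏ j ∈ Finset.Ioi i, (((k j : ℤ) : ℚ) - ((k i : ℤ) : ℚ)))
      = (Matrix.vandermonde fun i : Fin n => ((k i : ℤ) : ℚ)).det :=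
    (Matrix.det_vandermonde _).symm
  rw [hv, Finset.prod_congr rfl (fun j _ => Iio_fact (n := n) j)]
  have hM : (Matrix.of fun a b : Fin n => dcb (k b) ((a : ℕ) : ℤ))
      = Matrix.of (fun a b : Fin n => (((a : ℕ).factorial : ℚ))⁻¹ *
          (Matrix.of fun i j : Fin n =>
            (descPochhammer ℚ (j : ℕ)).eval ((k i : ℤ) : ℚ))ᵀ a b) := by
    ext a b
    simp only [Matrix.of_apply, Matrix.transpose_apply]
    rw [dcb, if_pos (Int.natCast_nonneg _), Int.toNat_natCast, descPochhammer_eval_prod,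
      div_eq_inv_mul]
  rw [hM, Matrix.det_mul_column, Matrix.det_transpose,
    ← Matrix.det_eval_matrixOfPolynomials_eq_det_vandermonde (fun i => ((k i : ℤ) : ℚ))
      (fun j => descPochhammer ℚ (j : ℕ)) (fun j => descPochhammer_natDegree ℚ (j : ℕ))
      (fun j => monic_descPochhammer ℚ (j : ℕ)),
    div_eq_mul_inv, ← Finset.prod_inv_distrib, mul_comm]

lemma det_dcb_zero {n : ℕ} (k : Fin n → ℤ) (r : Fin n → ℤ) (hr : ∀ i, r i ≤ (i : ℕ))
    (hs : ∑ i, r i ≠ ∑ i : Fin n, ((i : ℕ) : ℤ)) :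
    Matrix.det (Matrix.of fun a b : Fin n => dcb (k b) (r a)) = 0 := by
  by_cases hneg : ∃ i, r i < 0
  · obtain ⟨i, hi⟩ := hneg
    exact Matrix.det_eq_zero_of_row_eq_zero i (fun b => dcb_neg _ hi)
  push_neg at hneg
  by_cases hinj : Function.Injective r
  · exfalso
    apply hs
    set e : Fin n → Fin n := fun i => ⟨(r i).toNat, by have h1 := hr i; have h2 := hneg i; omega⟩
      with he
    have einj : Function.Injective e := by
      intro a b hab
      apply hinj
      have hv : (r a).toNat = (r b).toNat := congrArg Fin.val hab
      have h1 := hneg a; have h2 := hneg b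
      omega
    have ebij : Function.Bijective e := Finite.injective_iff_bijective.1 einj
    have hc := Function.Bijective.sum_comp ebij (fun i : Fin n => ((i : ℕ) : ℤ))
    rw [← hc]
    apply Finset.sum_congr rfl
    intro i _
    simp only [he, Function.comp_apply]
    exact (Int.toNat_of_nonneg (hneg i)).symm
  · rw [Function.not_injective_iff] at hinj
    obtain ⟨a, b, hab, hne⟩ := hinj
    apply Matrix.det_zero_of_row_eq hne
    funext c
    simp only [Matrix.of_apply, hab]

theorem antisymmetrized_difference_of_vandermonde_vanishes
    (n : ℕ) (m : Fin n → ℕ) (hm : m ≠ 0) (k : Fin n → ℤ) :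
    ∑ π : Equiv.Perm (Fin n),
        ((List.finRange n).foldr (fun i F => (fdiff i)^[m (π i)] ∘ F) id)
          (fun k' : Fin n → ℤ =>
            ∏ p ∈ Finset.univ.filter (fun p : Fin n × Fin n => p.1 < p.2),
              (((k' p.2 : ℤ) : ℚ) - ((k' p.1 : ℤ) : ℚ)) /
                (((p.2 : ℕ) : ℚ) - ((p.1 : ℕ) : ℚ))) k = 0 := by
  classical
  have hV : (fun k' : Fin n → ℤ =>
      ∏ p ∈ Finset.univ.filter (fun p : Fin n × Fin n => p.1 < p.2),
        (((k' p.2 : ℤ) : ℚ) - ((k' p.1 : ℤ) : ℚ)) / (((p.2 : ℕ) : ℚ) - ((p.1 : ℕ) : ℚ)))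
      = fun k' => ∑ σ : Equiv.Perm (Fin n), ((Equiv.Perm.sign σ : ℤ) : ℚ) *
          (fun kk : Fin n → ℤ => ∏ i : Fin n, dcb (kk i) ((σ i : ℕ) : ℤ)) k' := by
    funext k'
    rw [vdm k', Matrix.det_apply']
    simp only [Matrix.of_apply]
  rw [hV]
  have hT : ∀ π : Equiv.Perm (Fin n),
      ((List.finRange n).foldr (fun i F => (fdiff i)^[m (π i)] ∘ F) id)
        (fun k' => ∑ σ : Equiv.Perm (Fin n), ((Equiv.Perm.sign σ : ℤ) : ℚ) *
          (fun kk : Fin n → ℤ => ∏ i : Fin n, dcb (kk i) ((σ i : ℕ) : ℤ)) k') k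
      = ∑ σ : Equiv.Perm (Fin n), ((Equiv.Perm.sign σ : ℤ) : ℚ) *
          ∏ j : Fin n, dcb (k j) (((σ j : ℕ) : ℤ) - (m (π j) : ℤ)) := by
    intro π
    rw [foldr_fdiff_comb (L := List.finRange n) (M := fun i => m (π i))
      (s := Finset.univ) (c := fun σ : Equiv.Perm (Fin n) => ((Equiv.Perm.sign σ : ℤ) : ℚ))
      (f := fun σ kk => ∏ i : Fin n, dcb (kk i) ((σ i : ℕ) : ℤ))]
    apply Finset.sum_congr rfl
    intro σ _
    congr 1
    have hp := foldr_fdiff_prod (List.finRange n) (fun i => m (π i))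
      (fun j => fun x => dcb x ((σ j : ℕ) : ℤ))
    rw [hp]
    apply Finset.prod_congr rfl
    intro j _
    rw [foldr_update_eval (List.finRange n) (List.nodup_finRange n) _ _ j (List.mem_finRange j),
      ddop_iter_dcb]
  rw [Finset.sum_congr rfl (fun π _ => hT π), Finset.sum_comm]
  -- now : ∑ σ, ∑ π, c σ * ∏ j, dcb (k j) (σ j - m (π j)) = 0
  have hreindex : ∀ σ : Equiv.Perm (Fin n),
      (∑ π : Equiv.Perm (Fin n), ((Equiv.Perm.sign σ : ℤ) : ℚ) *
        ∏ j : Fin n, dcb (k j) (((σ j : ℕ) : ℤ) - (m (π j) : ℤ)))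
      = ∑ τ : Equiv.Perm (Fin n), ((Equiv.Perm.sign σ : ℤ) : ℚ) *
        ∏ j : Fin n, dcb (k j) (((σ j : ℕ) : ℤ) - (m (τ (σ j)) : ℤ)) := by
    intro σ
    rw [← Equiv.sum_comp (Equiv.mulRight σ)
      (fun π : Equiv.Perm (Fin n) => ((Equiv.Perm.sign σ : ℤ) : ℚ) *
        ∏ j : Fin n, dcb (k j) (((σ j : ℕ) : ℤ) - (m (π j) : ℤ)))]
    apply Finset.sum_congr rfl
    intro τ _
    simp [Equiv.Perm.mul_apply]
  rw [Finset.sum_congr rfl (fun σ _ => hreindex σ), Finset.sum_comm]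
  apply Finset.sum_eq_zero
  intro τ _
  have hdet : (∑ σ : Equiv.Perm (Fin n), ((Equiv.Perm.sign σ : ℤ) : ℚ) *
      ∏ j : Fin n, dcb (k j) (((σ j : ℕ) : ℤ) - (m (τ (σ j)) : ℤ)))
      = Matrix.det (Matrix.of fun a b : Fin n =>
          dcb (k b) (((a : ℕ) : ℤ) - (m (τ a) : ℤ))) := by
    rw [Matrix.det_apply']
    simp only [Matrix.of_apply]
  rw [hdet]
  apply det_dcb_zero
  · intro i
    have : (0 : ℤ) ≤ (m (τ i) : ℤ) := Int.natCast_nonneg _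
    omega
  · have hsum : ∑ i : Fin n, (m (τ i) : ℤ) = ∑ i : Fin n, (m i : ℤ) :=
      Equiv.sum_comp τ (fun i => (m i : ℤ))
    have hpos : 0 < ∑ i : Fin n, (m i : ℤ) := by
      obtain ⟨i, hi⟩ := Function.ne_iff.1 hm
      have : 0 < (m i : ℤ) := by
        have : m i ≠ 0 := hi
        omega
      calc (0:ℤ) < (m i : ℤ) := this
        _ ≤ ∑ i : Fin n, (m i : ℤ) :=
          Finset.single_le_sum (fun j _ => Int.natCast_nonneg (m j)) (Finset.mem_univ i)
    rw [Finset.sum_sub_distrib, hsum]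
    omega
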